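/- Let f be an entire function on ℂ, let E ⊂ ℂ be a set of points whose pairwise distances all exceed 2δ for some δ > 0, and let C > 0 be such that |f(z)| ≤ C for every z ∈ ℂ with dist(z, E) ≥ δ. Then f is constant. -/

import Mathlib

/-- Let `f` be entire, `E ⊆ ℂ` a set whose points have pairwise
distances exceeding `2δ` for some `δ > 0`, and suppose `|f z| ≤ C` for every `z` at
distance at least `δ` from `E`.  Then `f` is constant. -/
theorem entire_bounded_off_separated_set_constant
    (f : ℂ → ℂ) (hf : Differentiable ℂ f)
    (E : Set ℂ) (δ : ℝ) (hδ : 0 < δ)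
    (hsep : ∀ e₁ ∈ E, ∀ e₂ ∈ E, e₁ ≠ e₂ → 2 * δ < dist e₁ e₂)
    (C : ℝ) (hC : 0 < C)
    (hbound : ∀ z : ℂ, (∀ e ∈ E, δ ≤ dist z e) → ‖f z‖ ≤ C) :
    ∃ c : ℂ, ∀ z : ℂ, f z = c := by
  -- First: ‖f z‖ ≤ C for all z.
  have key : ∀ z : ℂ, ‖f z‖ ≤ C := by
    intro z
    by_cases hz : ∀ e ∈ E, δ ≤ dist z e
    · simpa using hbound z hz
    · push_neg at hz
      obtain ⟨e, heE, hze⟩ := hz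
      have : ‖f z‖ ≤ C := by
        apply Complex.norm_le_of_forall_mem_frontier_norm_le
          (Metric.isBounded_ball (x := e) (r := δ))
          (hf.diffContOnCl)
        · intro w hw
          rw [frontier_ball e hδ.ne'] at hw
          have hwe : dist w e = δ := hw
          have : ∀ e' ∈ E, δ ≤ dist w e' := by
            intro e' he'
            by_cases h : e' = e
            · subst h; exact hwe.ge
            · have hsep' := hsep e heE e' he' (Ne.symm h)
              have := dist_triangle e w e'
              rw [dist_comm e w, hwe] at this
              linarith [hsep', this]
          simpa using hbound w this
        · exact subset_closure (Metric.mem_ball.mpr hze)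
      exact this
  have hbd : Bornology.IsBounded (Set.range f) := by
    apply Metric.isBounded_range_iff.mpr
    refine ⟨2 * C, fun x y => ?_⟩
    calc dist (f x) (f y) ≤ ‖f x‖ + ‖f y‖ := dist_le_norm_add_norm _ _
    _ ≤ 2 * C := by linarith [key x, key y]
  exact ⟨f 0, fun z => hf.apply_eq_apply_of_bounded hbd z 0⟩
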